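/- Suppose at a point y on the boundary of the nonnegative orthant, some species X_j with y_j = 0 has at least one strictly positive input term in the j-th coordinate of the vector field f while all output terms vanish; then there exist ε > 0 and k > 0 such that f_j(x) > k for all x ∈ ℝ^m_{>0} with |x − y| < ε, and consequently y cannot be an ω-limit point of any trajectory starting in ℝ^m_{>0}. -/

import Mathlib

open Filter

/-- The right-hand side of the chemical reaction network ODE. -/
def netF {m : ℕ} {ι : Type} [Fintype ι] (y yp : ι → Fin m → ℕ)
    (R : ι → (Fin m → ℝ) → ℝ) (x : Fin m → ℝ) : Fin m → ℝ :=
  ∑ r : ι, R r x • (fun i => (yp r i : ℝ) - (y r i : ℝ))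

lemma netF_apply {m : ℕ} {ι : Type} [Fintype ι] (y yp : ι → Fin m → ℕ)
    (R : ι → (Fin m → ℝ) → ℝ) (x : Fin m → ℝ) (j : Fin m) :
    netF y yp R x j = ∑ r : ι, R r x * ((yp r j : ℝ) - (y r j : ℝ)) := by
  simp [netF, Finset.sum_apply]

set_option maxHeartbeats 1000000 in
/-- If at a boundary point `p` (with `p j = 0`) some input term for species `j`
is strictly positive while all output terms for `j` vanish, then `f j > k` on a
neighborhood of `p` in the positive orthant, and consequently `p` cannot be an
ω-limit point of any trajectory remaining in the positive orthant. -/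
theorem positive_input_not_omega_limit
    {m : ℕ} {ι : Type} [Fintype ι]
    (y yp : ι → Fin m → ℕ) (R : ι → (Fin m → ℝ) → ℝ)
    (hC1 : ∀ r, ContDiff ℝ 1 (R r))
    (hnonneg : ∀ r, ∀ x : Fin m → ℝ, (∀ i, 0 ≤ x i) → 0 ≤ R r x)
    (hvanish : ∀ r, ∀ x : Fin m → ℝ, ∀ i, y r i ≠ 0 → x i = 0 → R r x = 0)
    (p : Fin m → ℝ) (hpnn : ∀ i, 0 ≤ p i)
    (j : Fin m) (hpj : p j = 0)
    (hinput : ∃ r, y r j < yp r j ∧ 0 < R r p)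
    (houtput : ∀ r, yp r j < y r j → R r p = 0) :
    ∃ ε > (0 : ℝ), ∃ k > (0 : ℝ),
      (∀ x : Fin m → ℝ, (∀ i, 0 < x i) → dist x p < ε → k < netF y yp R x j) ∧
      ∀ x : ℝ → Fin m → ℝ,
        (∀ t : ℝ, 0 ≤ t → ∀ i, 0 < x t i) →
        (∀ t : ℝ, 0 ≤ t → HasDerivAt x (netF y yp R (x t)) t) →
        ¬ ∃ tn : ℕ → ℝ, Tendsto tn atTop atTop ∧
            Tendsto (fun n => x (tn n)) atTop (nhds p) := by
  classical
  -- the vector field is continuous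
  have hnetF : Continuous (netF y yp R) := by
    unfold netF
    exact continuous_finset_sum _ fun r _ =>
      ((hC1 r).continuous).smul continuous_const
  set g : (Fin m → ℝ) → ℝ := fun x => netF y yp R x j with hg
  have hgcont : Continuous g := (continuous_apply j).comp hnetF
  -- g p > 0
  have hgp : 0 < g p := by
    rw [hg]
    simp only [netF_apply]
    obtain ⟨r0, hr0lt, hr0pos⟩ := hinput
    refine Finset.sum_pos' (fun r _ => ?_) ⟨r0, Finset.mem_univ r0, ?_⟩
    · rcases lt_trichotomy (yp r j) (y r j) with h | h | h
      · rw [houtput r h]; ring_nf; simp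
      · rw [h]; simp
      · exact mul_nonneg (hnonneg r p hpnn) (by
          have : (y r j : ℝ) < yp r j := by exact_mod_cast h
          linarith)
    · have : (y r0 j : ℝ) < yp r0 j := by exact_mod_cast hr0lt
      exact mul_pos hr0pos (by linarith)
  set k : ℝ := g p / 2 with hk
  have hkpos : 0 < k := by positivity
  -- neighborhood where g > k
  have hU : IsOpen (g ⁻¹' Set.Ioi k) := (isOpen_Ioi).preimage hgcont
  have hpU : p ∈ g ⁻¹' Set.Ioi k := by
    simp only [Set.mem_preimage, Set.mem_Ioi, hk]; linarith
  obtain ⟨ε, hεpos, hball⟩ := Metric.isOpen_iff.1 hU p hpU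
  have hballk : ∀ z : Fin m → ℝ, dist z p < ε → k < g z := fun z hz =>
    hball (Metric.mem_ball.2 hz)
  -- bound on the vector field near p
  obtain ⟨C, hC⟩ := (isCompact_closedBall p ε).exists_bound_of_continuousOn
    hnetF.continuousOn
  set M : ℝ := max C 1 with hM
  have hMpos : (0 : ℝ) < M := lt_of_lt_of_le one_pos (le_max_right _ _)
  have hMb : ∀ z ∈ Metric.closedBall p ε, ‖netF y yp R z‖ ≤ M := fun z hz =>
    (hC z hz).trans (le_max_left _ _)
  set h : ℝ := ε / (8 * M) with hh
  have hhpos : 0 < h := by positivity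
  refine ⟨ε, hεpos, k, hkpos, fun z _ hz => hballk z hz, ?_⟩
  rintro x hxpos hxder ⟨tn, htn, hxtn⟩
  -- pick a good time b = tn n
  have hev1 : ∀ᶠ n in atTop, h ≤ tn n := htn.eventually_ge_atTop h
  have hev2 : ∀ᶠ n in atTop, dist (x (tn n)) p < min (ε / 2) (k * h) := by
    have := Metric.tendsto_nhds.1 hxtn (min (ε / 2) (k * h))
      (lt_min (by positivity) (by positivity))
    exact this
  obtain ⟨n, hn1, hn2⟩ := (hev1.and hev2).exists
  set b : ℝ := tn n with hb
  set a : ℝ := b - h with ha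
  have hab : a < b := by simp [ha]; linarith
  have ha0 : 0 ≤ a := by simp [ha]; linarith [hn1]
  have hb0 : 0 ≤ b := le_trans ha0 hab.le
  have hdb : dist (x b) p < ε / 2 := lt_of_lt_of_le hn2 (min_le_left _ _)
  -- continuity of x on [a, b]
  have hxcont : ∀ t ∈ Set.Icc a b, ContinuousAt x t := fun t ht =>
    (hxder t (ha0.trans ht.1)).continuousAt
  have hxconOn : ContinuousOn x (Set.Icc a b) := fun t ht =>
    (hxcont t ht).continuousWithinAt
  -- Claim: on [a, b] the trajectory stays within 3ε/4 of p
  have hstay : ∀ t ∈ Set.Icc a b, dist (x t) p < 3 * ε / 4 := by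
    by_contra hcon
    push_neg at hcon
    obtain ⟨t0, ht0, ht0d⟩ := hcon
    set S : Set ℝ := Set.Icc a b ∩ (fun t => dist (x t) p) ⁻¹' Set.Ici (3 * ε / 4)
      with hS
    have hSne : S.Nonempty := ⟨t0, ht0, ht0d⟩
    have hSbdd : BddAbove S := ⟨b, fun t ht => ht.1.2⟩
    have hScl : IsClosed S := by
      refine ContinuousOn.preimage_isClosed_of_isClosed ?_ isClosed_Icc isClosed_Ici
      exact (continuous_id.dist continuous_const).comp_continuousOn hxconOn
    have ht1S : sSup S ∈ S := hScl.csSup_mem hSne hSbdd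
    set t1 : ℝ := sSup S with ht1
    have ht1ab : t1 ∈ Set.Icc a b := ht1S.1
    have ht1d : 3 * ε / 4 ≤ dist (x t1) p := ht1S.2
    have ht1b : t1 < b := by
      rcases lt_or_eq_of_le ht1ab.2 with h' | h'
      · exact h'
      · exfalso; rw [h'] at ht1d; linarith
    -- beyond t1 the distance is below 3ε/4
    have hafter : ∀ t, t1 < t → t ≤ b → dist (x t) p < 3 * ε / 4 := by
      intro t htt1 htb
      by_contra hge
      push_neg at hge
      have : t ∈ S := ⟨⟨le_trans ht1ab.1 htt1.le, htb⟩, hge⟩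
      exact absurd (le_csSup hSbdd this) (not_le.2 htt1)
    -- the trajectory stays in the closed ε-ball on [t1, b]
    have hin : ∀ t ∈ Set.Icc t1 b, x t ∈ Metric.closedBall p ε := by
      intro t ht
      rcases eq_or_lt_of_le ht.1 with h' | h'
      · subst h'
        -- dist (x t1) p ≤ 3ε/4 by right continuity
        have htend : Tendsto (fun t => dist (x t) p) (nhdsWithin t1 (Set.Ioi t1))
            (nhds (dist (x t1) p)) :=
          Filter.Tendsto.dist
            (((hxcont t1 ⟨ht1ab.1, ht1b.le⟩).tendsto).mono_left nhdsWithin_le_nhds)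
            tendsto_const_nhds
        have hev : ∀ᶠ s in nhdsWithin t1 (Set.Ioi t1), dist (x s) p ≤ 3 * ε / 4 := by
          filter_upwards [Ioo_mem_nhdsGT ht1b] with s hs
          exact (hafter s hs.1 hs.2.le).le
        have : dist (x t1) p ≤ 3 * ε / 4 := le_of_tendsto htend hev
        exact Metric.mem_closedBall.2 (by linarith)
      · exact Metric.mem_closedBall.2 (by linarith [hafter t h' ht.2])
    -- speed bound on [t1, b]
    have hderiv : ∀ t ∈ Set.Icc t1 b,
        HasDerivWithinAt x (netF y yp R (x t)) (Set.Icc t1 b) t := fun t ht =>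
      (hxder t (le_trans (le_trans ha0 ht1ab.1) ht.1)).hasDerivWithinAt
    have hbound : ∀ t ∈ Set.Ico t1 b, ‖netF y yp R (x t)‖ ≤ M := fun t ht =>
      hMb (x t) (hin t ⟨ht.1, ht.2.le⟩)
    have hnorm := norm_image_sub_le_of_norm_deriv_le_segment' hderiv hbound b
      (Set.right_mem_Icc.2 ht1b.le)
    have hba : b - t1 ≤ h := by
      have := ht1ab.1
      simp only [ha] at this
      linarith
    have hMh : M * (b - t1) ≤ ε / 8 := by
      have : M * (b - t1) ≤ M * h := by
        apply mul_le_mul_of_nonneg_left hba hMpos.le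
      calc M * (b - t1) ≤ M * h := this
        _ = ε / 8 := by rw [hh]; field_simp
    have hdd : dist (x b) (x t1) ≤ ε / 8 := by
      rw [dist_eq_norm]; exact hnorm.trans hMh
    have : dist (x t1) p ≤ dist (x t1) (x b) + dist (x b) p := dist_triangle _ _ _
    rw [dist_comm (x t1) (x b)] at this
    linarith
  -- on [a,b], the j-th coordinate grows at rate at least k
  have hder' : ∀ t ∈ Set.Icc a b,
      HasDerivAt (fun s => x s j - k * s) (netF y yp R (x t) j - k) t := by
    intro t ht
    have h1 : HasDerivAt (fun s => x s j) (netF y yp R (x t) j) t := by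
      have := (hxder t (ha0.trans ht.1)).hasFDerivAt
      have h2 := ((ContinuousLinearMap.proj j :
        (Fin m → ℝ) →L[ℝ] ℝ).hasFDerivAt).comp t this
      have := h2.hasDerivAt
      exact hasDerivAt_pi.1 (hxder t (ha0.trans ht.1)) j
    have h3 := h1.sub ((hasDerivAt_id t).const_mul k)
    rw [mul_one] at h3
    exact h3
  have hmono : StrictMonoOn (fun s => x s j - k * s) (Set.Icc a b) := by
    apply strictMonoOn_of_deriv_pos (convex_Icc a b)
    · exact fun t ht => ((hder' t ht).continuousAt).continuousWithinAt
    · intro t ht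
      rw [interior_Icc] at ht
      rw [(hder' t ⟨ht.1.le, ht.2.le⟩).deriv]
      have hpos : ∀ i, 0 < x t i := hxpos t (ha0.trans ht.1.le)
      have := hballk (x t) (lt_trans (hstay t ⟨ht.1.le, ht.2.le⟩) (by linarith))
      simp only [hg] at this
      linarith
  have hlt := hmono (Set.left_mem_Icc.2 hab.le) (Set.right_mem_Icc.2 hab.le) hab
  simp only at hlt
  -- hence x b j > k * h, but x b j < k * h : contradiction
  have hxaj : 0 < x a j := hxpos a ha0 j
  have hxbj : x b j < k * h := by
    have h1 : dist (x b j) (p j) ≤ dist (x b) p := dist_le_pi_dist (x b) p j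
    have h2 : dist (x b) p < k * h := lt_of_lt_of_le hn2 (min_le_right _ _)
    have : |x b j - p j| < k * h := lt_of_le_of_lt (by rw [← Real.dist_eq]; exact h1) h2
    rw [hpj, sub_zero] at this
    exact lt_of_le_of_lt (le_abs_self _) this
  have : k * b - k * a = k * h := by rw [ha]; ring
  linarith
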